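/- Let f(y) = Σ_{i=1}^k c_i y^{r_i}(log y)^{ℓ_i} on (1,∞) with c_i ∈ ℝ nonzero, r_i ∈ ℚ, ℓ_i ∈ ℕ, and the pairs (r_i,ℓ_i) pairwise distinct. If f(y) → 0 as y → +∞, then r_i < 0 for all i, and there exist r > 0 and y_0 > 1 such that |f(y)| ≤ y^{-r} for all y > y_0. -/

import Mathlib

open Real Finset Filter

private lemma rpow_mul_log_pow_tendsto_zero {s : ℝ} (hs : s < 0) (n : ℕ) :
    Tendsto (fun y : ℝ => y ^ s * Real.log y ^ n) atTop (nhds 0) := by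
  have h := (isLittleO_log_rpow_rpow_atTop (n : ℝ) (neg_pos.2 hs)).tendsto_div_nhds_zero
  refine h.congr' ?_
  filter_upwards [eventually_gt_atTop (0:ℝ)] with y hy
  rw [Real.rpow_natCast, div_eq_mul_inv, Real.rpow_neg hy.le, inv_inv, mul_comm]

private lemma log_gt_one {y : ℝ} (hy : 3 ≤ y) : 1 < Real.log y := by
  have he : Real.exp 1 < 3 := lt_trans Real.exp_one_lt_d9 (by norm_num)
  calc (1:ℝ) = Real.log (Real.exp 1) := (Real.log_exp 1).symm
    _ < Real.log y := Real.log_lt_log (Real.exp_pos 1) (by linarith)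

theorem decay_rate_one_var (k : ℕ) (r : Fin k → ℚ) (ℓ : Fin k → ℕ) (c : Fin k → ℝ)
    (hc : ∀ i, c i ≠ 0)
    (hdist : ∀ i j, i ≠ j → (r i, ℓ i) ≠ (r j, ℓ j))
    (hlim : Tendsto (fun y : ℝ => ∑ i, c i * y ^ ((r i : ℝ)) * (Real.log y) ^ (ℓ i))
      atTop (nhds 0)) :
    (∀ i, (r i : ℝ) < 0) ∧
    ∃ ρ : ℝ, 0 < ρ ∧ ∃ y₀ : ℝ, 1 < y₀ ∧ ∀ y : ℝ, y₀ < y →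
      |∑ i, c i * y ^ ((r i : ℝ)) * (Real.log y) ^ (ℓ i)| ≤ y ^ (-ρ) := by
  set f : ℝ → ℝ := fun y => ∑ i, c i * y ^ ((r i : ℝ)) * (Real.log y) ^ (ℓ i) with hf
  rcases Nat.eq_zero_or_pos k with hk | hk
  · subst hk
    refine ⟨fun i => i.elim0, 1, one_pos, 2, one_lt_two, fun y hy => ?_⟩
    simp only [hf, Finset.univ_eq_empty, Finset.sum_empty, abs_zero]
    exact (Real.rpow_pos_of_pos (by linarith) _).le
  · have : Nonempty (Fin k) := ⟨⟨0, hk⟩⟩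
    obtain ⟨m, -, hm⟩ := Finset.exists_max_image Finset.univ
      (fun i => toLex (r i, ℓ i)) Finset.univ_nonempty
    have hclass : ∀ j, j ≠ m → (r j < r m ∨ (r j = r m ∧ ℓ j < ℓ m)) := by
      intro j hj
      have h := hm j (Finset.mem_univ j)
      rw [Prod.Lex.le_iff] at h
      rcases h with h | ⟨h1, h2⟩
      · exact Or.inl h
      · refine Or.inr ⟨h1, lt_of_le_of_ne h2 ?_⟩
        intro hE
        exact hdist j m hj (Prod.ext h1 hE)
    set D : ℝ → ℝ := fun y => y ^ ((r m : ℝ)) * Real.log y ^ (ℓ m) with hD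
    have hDpos : ∀ y : ℝ, 3 ≤ y → 0 < D y := by
      intro y hy
      have h1 : (0:ℝ) < y := by linarith
      have h2 := log_gt_one hy
      exact mul_pos (Real.rpow_pos_of_pos h1 _) (pow_pos (by linarith) _)
    -- each term over D tends to c m or 0
    have hterm : ∀ j : Fin k, Tendsto
        (fun y => c j * y ^ ((r j : ℝ)) * Real.log y ^ (ℓ j) / D y)
        atTop (nhds (if j = m then c m else 0)) := by
      intro j
      by_cases hj : j = m
      · have hifs : (if j = m then c m else 0) = c m := if_pos hj
        rw [hifs]
        subst hj
        refine tendsto_const_nhds.congr' ?_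
        filter_upwards [eventually_ge_atTop (3:ℝ)] with y hy
        simp only [hD]
        rw [mul_assoc, mul_div_assoc, div_self (hDpos y hy).ne', mul_one]
      · simp only [if_neg hj]
        rcases hclass j hj with hlt | ⟨heq, hl⟩
        · have hs : ((r j : ℝ) - (r m : ℝ)) < 0 := by
            have : (r j : ℝ) < (r m : ℝ) := by exact_mod_cast hlt
            linarith
          have hlim0 : Tendsto
              (fun y : ℝ => |c j| * (y ^ ((r j:ℝ) - (r m:ℝ)) * Real.log y ^ (ℓ j)))
              atTop (nhds 0) := by
            simpa using (rpow_mul_log_pow_tendsto_zero hs (ℓ j)).const_mul |c j|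
          refine squeeze_zero_norm' ?_ hlim0
          filter_upwards [eventually_ge_atTop (3:ℝ)] with y hy
          have h1 : (0:ℝ) < y := by linarith
          have h2 := log_gt_one hy
          have hyR : (0:ℝ) < y ^ ((r m : ℝ)) := Real.rpow_pos_of_pos h1 _
          have hyj : (0:ℝ) < y ^ ((r j : ℝ)) := Real.rpow_pos_of_pos h1 _
          have hlL : (0:ℝ) < Real.log y ^ (ℓ m) := pow_pos (by linarith) _
          have hlj : (0:ℝ) < Real.log y ^ (ℓ j) := pow_pos (by linarith) _
          have hA : (0:ℝ) < y ^ ((r j:ℝ) - (r m:ℝ)) := Real.rpow_pos_of_pos h1 _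
          have key : c j * y ^ ((r j:ℝ)) * Real.log y ^ (ℓ j) / D y
              = c j * (y ^ ((r j:ℝ) - (r m:ℝ)) * Real.log y ^ (ℓ j)) / Real.log y ^ (ℓ m) := by
            simp only [hD]
            rw [Real.rpow_sub h1]
            field_simp
          rw [key, Real.norm_eq_abs, abs_div, abs_mul,
            abs_of_pos (mul_pos hA hlj), abs_of_pos hlL]
          exact div_le_self (by positivity) (one_le_pow₀ h2.le)
        · have hL' : ℓ m - ℓ j ≠ 0 := Nat.sub_ne_zero_of_lt hl
          have h0 : Tendsto (fun y : ℝ => c j * (Real.log y ^ (ℓ m - ℓ j))⁻¹)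
              atTop (nhds 0) := by
            simpa using
              (((tendsto_pow_atTop hL').comp Real.tendsto_log_atTop).inv_tendsto_atTop).const_mul (c j)
          refine h0.congr' ?_
          filter_upwards [eventually_ge_atTop (3:ℝ)] with y hy
          have h1 : (0:ℝ) < y := by linarith
          have h2 := log_gt_one hy
          have hyR : (0:ℝ) < y ^ ((r m : ℝ)) := Real.rpow_pos_of_pos h1 _
          have hll : Real.log y ≠ 0 := by linarith
          have hre : (r j : ℝ) = (r m : ℝ) := by exact_mod_cast heq
          have hpow : Real.log y ^ (ℓ m) = Real.log y ^ (ℓ j) * Real.log y ^ (ℓ m - ℓ j) := by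
            rw [← pow_add, Nat.add_sub_cancel' hl.le]
          simp only [hD]
          rw [hre, hpow]
          have hp1 : Real.log y ^ (ℓ j) ≠ 0 := pow_ne_zero _ hll
          have hp2 : Real.log y ^ (ℓ m - ℓ j) ≠ 0 := pow_ne_zero _ hll
          field_simp
    have hratio : Tendsto (fun y => f y / D y) atTop (nhds (c m)) := by
      have hsum := tendsto_finset_sum Finset.univ (fun j (_ : j ∈ Finset.univ) => hterm j)
      have hval : ∑ j, (if j = m then c m else 0) = c m := by simp
      rw [hval] at hsum
      refine hsum.congr fun y => ?_
      simp only [hf]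
      rw [Finset.sum_div]
    -- log^L and y^R stuff: show r m < 0
    have hRneg : (r m : ℝ) < 0 := by
      by_contra hR0
      push_neg at hR0
      have hcontra : False := by
        rcases eq_or_lt_of_le hR0 with hR0 | hR0
        · rcases Nat.eq_zero_or_pos (ℓ m) with hL0 | hL0
          · -- D = 1
            have hfc : Tendsto f atTop (nhds (c m)) := by
              refine hratio.congr fun y => ?_
              simp only [hD]
              rw [← hR0, hL0, Real.rpow_zero, pow_zero, mul_one, div_one]
            exact hc m (tendsto_nhds_unique hfc hlim)
          · -- D = log^L → atTop
            have hDtop : Tendsto D atTop atTop := by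
              have hlt : Tendsto (fun y : ℝ => Real.log y ^ (ℓ m)) atTop atTop :=
                (tendsto_pow_atTop hL0.ne').comp Real.tendsto_log_atTop
              refine hlt.congr' ?_
              filter_upwards [eventually_gt_atTop (0:ℝ)] with y hy
              simp only [hD]
              rw [← hR0, Real.rpow_zero, one_mul]
            have habs : Tendsto (fun y => |f y|) atTop atTop := by
              have h3 := Filter.Tendsto.pos_mul_atTop (abs_pos.2 (hc m)) hratio.abs
                (tendsto_abs_atTop_atTop.comp hDtop)
              refine h3.congr' ?_
              filter_upwards [eventually_ge_atTop (3:ℝ)] with y hy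
              simp only [Function.comp_apply]
              rw [← abs_mul, div_mul_cancel₀ _ (hDpos y hy).ne']
            have e1 := habs.eventually_ge_atTop 1
            have e2 : ∀ᶠ y in atTop, |f y| < 1 := by
              have h := hlim.abs
              rw [abs_zero] at h
              exact h.eventually_lt_const one_pos
            obtain ⟨y, h1, h2⟩ := (e1.and e2).exists
            linarith
        · -- r m > 0 : D ≥ y^R → atTop
          have hDtop : Tendsto D atTop atTop := by
            refine tendsto_atTop_mono' atTop ?_ (tendsto_rpow_atTop hR0)
            filter_upwards [eventually_ge_atTop (3:ℝ)] with y hy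
            have h1 : (0:ℝ) < y := by linarith
            have h2 := log_gt_one hy
            have := Real.rpow_pos_of_pos h1 ((r m : ℝ))
            calc y ^ ((r m:ℝ)) = y ^ ((r m:ℝ)) * 1 := (mul_one _).symm
              _ ≤ D y := by
                simp only [hD]
                exact mul_le_mul_of_nonneg_left (one_le_pow₀ h2.le) this.le
          have habs : Tendsto (fun y => |f y|) atTop atTop := by
            have h3 := Filter.Tendsto.pos_mul_atTop (abs_pos.2 (hc m)) hratio.abs
              (tendsto_abs_atTop_atTop.comp hDtop)
            refine h3.congr' ?_
            filter_upwards [eventually_ge_atTop (3:ℝ)] with y hy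
            simp only [Function.comp_apply]
            rw [← abs_mul, div_mul_cancel₀ _ (hDpos y hy).ne']
          have e1 := habs.eventually_ge_atTop 1
          have e2 : ∀ᶠ y in atTop, |f y| < 1 := by
            have h := hlim.abs
            rw [abs_zero] at h
            exact h.eventually_lt_const one_pos
          obtain ⟨y, h1, h2⟩ := (e1.and e2).exists
          linarith
      exact hcontra
    have hle : ∀ j, (r j : ℝ) ≤ (r m : ℝ) := by
      intro j
      by_cases hj : j = m
      · subst hj; exact le_rfl
      · rcases hclass j hj with hlt | ⟨heq, -⟩
        · exact_mod_cast hlt.le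
        · exact_mod_cast heq.le
    have hall : ∀ i, (r i : ℝ) < 0 := fun i => lt_of_le_of_lt (hle i) hRneg
    refine ⟨hall, -(r m : ℝ)/2, by linarith, ?_⟩
    set ρ : ℝ := -(r m : ℝ)/2 with hρ
    have hmix : Tendsto (fun y => y ^ ρ * f y) atTop (nhds 0) := by
      have hterm2 : ∀ j : Fin k, Tendsto
          (fun y : ℝ => c j * (y ^ (ρ + (r j:ℝ)) * Real.log y ^ (ℓ j))) atTop (nhds 0) := by
        intro j
        have hs : ρ + (r j:ℝ) < 0 := by
          have := hle j
          rw [hρ]; linarith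
        simpa using (rpow_mul_log_pow_tendsto_zero hs (ℓ j)).const_mul (c j)
      have hsum := tendsto_finset_sum Finset.univ (fun j (_ : j ∈ Finset.univ) => hterm2 j)
      rw [Finset.sum_const_zero] at hsum
      refine hsum.congr' ?_
      filter_upwards [eventually_gt_atTop (0:ℝ)] with y hy
      simp only [hf]
      rw [Finset.mul_sum]
      refine Finset.sum_congr rfl fun j _ => ?_
      rw [Real.rpow_add hy]
      ring
    have hev : ∀ᶠ y in atTop, |y ^ ρ * f y| < 1 := by
      have h := hmix.abs
      rw [abs_zero] at h
      exact h.eventually_lt_const one_pos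
    obtain ⟨y₁, hy₁⟩ := eventually_atTop.1 hev
    refine ⟨max y₁ 2, lt_of_lt_of_le one_lt_two (le_max_right _ _), fun y hy => ?_⟩
    have hy2 : (2:ℝ) ≤ y := le_trans (le_max_right y₁ 2) hy.le
    have h1 : (0:ℝ) < y := by linarith
    have hb := hy₁ y (le_trans (le_max_left _ _) hy.le)
    have hyρ : 0 < y ^ ρ := Real.rpow_pos_of_pos h1 _
    rw [abs_mul, abs_of_pos hyρ] at hb
    rw [Real.rpow_neg h1.le, ← one_div]
    exact (le_div_iff₀ hyρ).2 (by nlinarith)
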